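/- arXiv:1605.06767 — 2 statements merged into one kernel-verified Lean document; each statement's English description precedes it below -/
import Mathlib

section
/- The Dirichlet coalgebra Dir is isomorphic, as a coalgebra, to the polynomial coalgebra k[{X_i : i ∈ ℕ}] on countably many primitive-free (divided-type) generators, via the map z_n ↦ X_{o(p_1)} ⋯ X_{o(p_s)} where n = p_1 ⋯ p_s is the prime factorization of n (with multiplicity) and o(p) is the index of the prime p in the increasing enumeration of primes. -/
open TensorProduct

noncomputable def dirExp : ℕ+ → (ℕ →₀ ℕ) :=
  fun n => Finsupp.mapDomain (Nat.count Nat.Prime) (Nat.factorization (n : ℕ))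

lemma dirNum_aux (f : ℕ →₀ ℕ) :
    ∀ p ∈ (Finsupp.mapDomain (Nat.nth Nat.Prime) f).support, Nat.Prime p := by
  classical
  intro p hp
  have := Finsupp.mapDomain_support hp
  obtain ⟨i, _, rfl⟩ := Finset.mem_image.mp this
  exact Nat.prime_nth_prime i

lemma dirNum_pos (f : ℕ →₀ ℕ) :
    0 < (Finsupp.mapDomain (Nat.nth Nat.Prime) f).prod (· ^ ·) := by
  apply Finset.prod_pos
  intro p hp
  exact pow_pos (dirNum_aux f p hp).pos _

noncomputable def dirNum : (ℕ →₀ ℕ) → ℕ+ :=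
  fun f => ⟨(Finsupp.mapDomain (Nat.nth Nat.Prime) f).prod (· ^ ·), dirNum_pos f⟩

lemma dirExp_dirNum (f : ℕ →₀ ℕ) : dirExp (dirNum f) = f := by
  have hfac : Nat.factorization ((dirNum f : ℕ+) : ℕ)
      = Finsupp.mapDomain (Nat.nth Nat.Prime) f :=
    Nat.prod_pow_factorization_eq_self (dirNum_aux f)
  unfold dirExp
  rw [hfac, ← Finsupp.mapDomain_comp]
  have : (Nat.count Nat.Prime ∘ Nat.nth Nat.Prime) = id := by
    funext i
    exact Nat.count_nth_of_infinite Nat.infinite_setOf_prime i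
  rw [this, Finsupp.mapDomain_id]

lemma dirNum_dirExp (n : ℕ+) : dirNum (dirExp n) = n := by
  apply PNat.coe_injective
  show (Finsupp.mapDomain (Nat.nth Nat.Prime) (dirExp n)).prod (· ^ ·) = (n : ℕ)
  unfold dirExp
  rw [← Finsupp.mapDomain_comp,
    Finsupp.mapDomain_congr (g := id) (fun p hp => by
      exact Nat.nth_count (Nat.prime_of_mem_primeFactors hp)),
    Finsupp.mapDomain_id]
  exact Nat.factorization_prod_pow_eq_self n.ne_zero

noncomputable def dirEquiv : ℕ+ ≃ (ℕ →₀ ℕ) :=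
  ⟨dirExp, dirNum, dirNum_dirExp, dirExp_dirNum⟩

lemma dirExp_mul (a b : ℕ+) : dirExp (a * b) = dirExp a + dirExp b := by
  unfold dirExp
  rw [PNat.mul_coe, Nat.factorization_mul a.ne_zero b.ne_zero, Finsupp.mapDomain_add]

lemma dirExp_one : dirExp 1 = 0 := by
  unfold dirExp
  simp

/-- The Dirichlet coalgebra `Dir` is isomorphic, as a coalgebra, to the
polynomial coalgebra `k[{X_i : i ∈ ℕ}]` on countably many divided-type
generators (monomials `m` satisfy `Δ(m) = ∑_{m₁+m₂=m} m₁ ⊗ m₂`), via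
`z_n ↦ X_{o(p_1)} ⋯ X_{o(p_s)}` where `n = p_1 ⋯ p_s` is the prime
factorization of `n` and `o(p)` is the index of `p` in the increasing
enumeration of the primes.  Monomials in the `X_i` are modelled by their
exponent vectors `ℕ →₀ ℕ`, and the image of `z_n` is the monomial with
exponent vector the prime factorization of `n` transported along `o`. -/
theorem dirichlet_coalgebra_iso_polynomial_coalgebra (k : Type*) [Field k]
    -- the Dirichlet coalgebra Dir, with basis {zₙ = single n 1, n ∈ ℕ = {1,2,...}}
    (ΔD : (ℕ+ →₀ k) →ₗ[k] (ℕ+ →₀ k) ⊗[k] (ℕ+ →₀ k)) (εD : (ℕ+ →₀ k) →ₗ[k] k)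
    (hΔD : ∀ n : ℕ+, ΔD (Finsupp.single n 1) =
      ∑ p ∈ Nat.divisorsAntidiagonal (n : ℕ),
        Finsupp.single p.1.toPNat' (1 : k) ⊗ₜ[k] Finsupp.single p.2.toPNat' (1 : k))
    (hεD : ∀ n : ℕ+, εD (Finsupp.single n 1) = if n = 1 then 1 else 0)
    -- the polynomial coalgebra k[{X_i : i ∈ ℕ}], with basis the monomials,
    -- indexed by exponent vectors m : ℕ →₀ ℕ
    (ΔP : ((ℕ →₀ ℕ) →₀ k) →ₗ[k] ((ℕ →₀ ℕ) →₀ k) ⊗[k] ((ℕ →₀ ℕ) →₀ k))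
    (εP : ((ℕ →₀ ℕ) →₀ k) →ₗ[k] k)
    (hΔP : ∀ m : ℕ →₀ ℕ, ΔP (Finsupp.single m 1) =
      ∑ p ∈ Finset.HasAntidiagonal.antidiagonal m,
        Finsupp.single p.1 (1 : k) ⊗ₜ[k] Finsupp.single p.2 (1 : k))
    (hεP : ∀ m : ℕ →₀ ℕ, εP (Finsupp.single m 1) = if m = 0 then 1 else 0) :
    ∃ Φ : (ℕ+ →₀ k) ≃ₗ[k] ((ℕ →₀ ℕ) →₀ k),
      (∀ n : ℕ+, Φ (Finsupp.single n 1) =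
        Finsupp.single
          (Finsupp.mapDomain (Nat.count Nat.Prime) (Nat.factorization (n : ℕ))) 1) ∧
      (∀ m : ℕ+ →₀ k,
        TensorProduct.map Φ.toLinearMap Φ.toLinearMap (ΔD m) = ΔP (Φ m)) ∧
      (∀ m : ℕ+ →₀ k, εP (Φ m) = εD m) := by
  classical
  set Φ : (ℕ+ →₀ k) ≃ₗ[k] ((ℕ →₀ ℕ) →₀ k) := Finsupp.domLCongr dirEquiv with hΦ
  have hsingle : ∀ n : ℕ+, Φ (Finsupp.single n 1) = Finsupp.single (dirExp n) 1 := by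
    intro n
    simp [hΦ, dirEquiv]
  have hZero : ∀ n : ℕ+, dirExp n = 0 ↔ n = 1 := by
    intro n
    constructor
    · intro h
      exact dirEquiv.injective (a₁ := n) (a₂ := 1)
        (by simpa [dirEquiv, dirExp_one] using h)
    · rintro rfl; exact dirExp_one
  refine ⟨Φ, fun n => hsingle n, ?_, ?_⟩
  · -- comultiplication
    have key : (TensorProduct.map Φ.toLinearMap Φ.toLinearMap).comp ΔD
        = ΔP.comp Φ.toLinearMap := by
      apply Finsupp.lhom_ext
      intro n b
      have hb : (Finsupp.single n b : ℕ+ →₀ k) = b • Finsupp.single n 1 := by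
        simp [Finsupp.smul_single]
      rw [hb]
      simp only [map_smul, LinearMap.comp_apply]
      congr 1
      rw [hΔD n, LinearEquiv.coe_coe, hsingle n, hΔP]
      rw [map_sum]
      refine Finset.sum_nbij' (i := fun p => (dirExp p.1.toPNat', dirExp p.2.toPNat'))
        (j := fun q => (((dirEquiv.symm q.1 : ℕ+) : ℕ), ((dirEquiv.symm q.2 : ℕ+) : ℕ)))
        ?_ ?_ ?_ ?_ ?_
      · intro p hp
        obtain ⟨hmul, hn0⟩ := Nat.mem_divisorsAntidiagonal.mp hp
        have h1 : 0 < p.1 := Nat.pos_of_ne_zero (fun h => hn0 (by rw [← hmul, h]; ring))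
        have h2 : 0 < p.2 := Nat.pos_of_ne_zero (fun h => hn0 (by rw [← hmul, h]; ring))
        have hxy : p.1.toPNat' * p.2.toPNat' = n := by
          apply PNat.coe_injective
          rw [PNat.mul_coe, PNat.toPNat'_coe h1, PNat.toPNat'_coe h2, hmul]
        rw [Finset.HasAntidiagonal.mem_antidiagonal, ← dirExp_mul, hxy]
      · intro q hq
        rw [Finset.HasAntidiagonal.mem_antidiagonal] at hq
        have h1 : dirExp (dirEquiv.symm q.1) = q.1 := dirEquiv.apply_symm_apply q.1
        have h2 : dirExp (dirEquiv.symm q.2) = q.2 := dirEquiv.apply_symm_apply q.2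
        have hmul : dirEquiv.symm q.1 * dirEquiv.symm q.2 = n := by
          apply dirEquiv.injective
          show dirExp _ = dirExp n
          rw [dirExp_mul, h1, h2, hq]
        rw [Nat.mem_divisorsAntidiagonal]
        constructor
        · rw [← PNat.mul_coe, hmul]
        · exact n.ne_zero
      · intro p hp
        obtain ⟨hmul, hn0⟩ := Nat.mem_divisorsAntidiagonal.mp hp
        have h1 : 0 < p.1 := Nat.pos_of_ne_zero (fun h => hn0 (by rw [← hmul, h]; ring))
        have h2 : 0 < p.2 := Nat.pos_of_ne_zero (fun h => hn0 (by rw [← hmul, h]; ring))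
        have e1 : dirEquiv.symm (dirExp p.1.toPNat') = p.1.toPNat' :=
          dirEquiv.symm_apply_apply _
        have e2 : dirEquiv.symm (dirExp p.2.toPNat') = p.2.toPNat' :=
          dirEquiv.symm_apply_apply _
        ext
        · simp only [e1]; exact PNat.toPNat'_coe h1
        · simp only [e2]; exact PNat.toPNat'_coe h2
      · intro q hq
        have e1 : ((dirEquiv.symm q.1 : ℕ+) : ℕ).toPNat' = dirEquiv.symm q.1 :=
          PNat.coe_toPNat' _
        have e2 : ((dirEquiv.symm q.2 : ℕ+) : ℕ).toPNat' = dirEquiv.symm q.2 :=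
          PNat.coe_toPNat' _
        ext
        · show (dirExp _ : ℕ →₀ ℕ) _ = _
          rw [e1]
          exact congrFun (congrArg _ (dirEquiv.apply_symm_apply q.1)) _
        · show (dirExp _ : ℕ →₀ ℕ) _ = _
          rw [e2]
          exact congrFun (congrArg _ (dirEquiv.apply_symm_apply q.2)) _
      · intro p hp
        rw [TensorProduct.map_tmul]
        simp only [LinearEquiv.coe_coe, hsingle]
    intro m
    exact LinearMap.congr_fun key m
  · -- counit
    have key : εP.comp Φ.toLinearMap = εD := by
      apply Finsupp.lhom_ext
      intro n b
      have hb : (Finsupp.single n b : ℕ+ →₀ k) = b • Finsupp.single n 1 := by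
        simp [Finsupp.smul_single]
      rw [hb]
      simp only [map_smul, LinearMap.comp_apply]
      congr 1
      rw [LinearEquiv.coe_coe, hsingle n, hεP, hεD]
      simp [hZero n]
    intro m
    exact LinearMap.congr_fun key m
end

section
/- Dir_{(m+1)} is isomorphic to Dir_{(m)} ⊗ k[X_{m+1}] as a left Dir_{(m)}-comodule (with coaction induced by the comultiplication of Dir_{(m)} on the left tensor factor); in particular Dir_{(m+1)} is a cofree, hence coflat, left Dir_{(m)}-comodule. -/
open TensorProduct

namespace DirAux

variable {m : ℕ}

/-- restriction -/
noncomputable def r (a : Fin (m + 1) →₀ ℕ) : Fin m →₀ ℕ :=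
  Finsupp.comapDomain Fin.castSucc a ((Fin.castSucc_injective m).injOn)

/-- embedding -/
noncomputable def emb (b : Fin m →₀ ℕ) : Fin (m + 1) →₀ ℕ :=
  Finsupp.embDomain Fin.castSuccEmb b

@[simp] lemma r_apply (a : Fin (m + 1) →₀ ℕ) (i : Fin m) :
    r a i = a i.castSucc := rfl

@[simp] lemma emb_apply_castSucc (b : Fin m →₀ ℕ) (i : Fin m) :
    emb b i.castSucc = b i := by
  simpa [emb] using Finsupp.embDomain_apply_self Fin.castSuccEmb b i

@[simp] lemma emb_apply_last (b : Fin m →₀ ℕ) : emb b (Fin.last m) = 0 := by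
  apply Finsupp.embDomain_notin_range
  rintro ⟨j, hj⟩
  exact absurd hj (Fin.castSucc_lt_last j).ne

lemma r_add (a a' : Fin (m + 1) →₀ ℕ) : r (a + a') = r a + r a' := by
  ext i; simp

lemma r_emb (b : Fin m →₀ ℕ) : r (emb b) = b := by
  ext i; simp

lemma r_single_last (e : ℕ) : r (Finsupp.single (Fin.last m) e) = 0 := by
  ext i
  simp [Finsupp.single_apply, (Fin.castSucc_lt_last i).ne']

lemma decomp (a : Fin (m + 1) →₀ ℕ) :
    emb (r a) + Finsupp.single (Fin.last m) (a (Fin.last m)) = a := by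
  ext i
  refine Fin.lastCases ?_ ?_ i
  · simp [Finsupp.single_apply]
  · intro j
    simp [Finsupp.single_apply, (Fin.castSucc_lt_last j).ne, (Fin.castSucc_lt_last j).ne']

lemma emb_last_eq_zero (b : Fin m →₀ ℕ) (e : ℕ) :
    (emb b + Finsupp.single (Fin.last m) e) (Fin.last m) = e := by simp

lemma r_emb_add_single (b : Fin m →₀ ℕ) (e : ℕ) :
    r (emb b + Finsupp.single (Fin.last m) e) = b := by
  rw [r_add, r_emb, r_single_last, add_zero]

/-- the splitting equivalence -/
noncomputable def splitEquiv (m : ℕ) : (Fin (m + 1) →₀ ℕ) ≃ (Fin m →₀ ℕ) × ℕ where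
  toFun a := (r a, a (Fin.last m))
  invFun p := emb p.1 + Finsupp.single (Fin.last m) p.2
  left_inv a := decomp a
  right_inv p := by
    refine Prod.ext ?_ ?_
    · exact r_emb_add_single p.1 p.2
    · exact emb_last_eq_zero p.1 p.2

end DirAux

open DirAux

/-- `Dir_{(m+1)}` is isomorphic to `Dir_{(m)} ⊗ k[X_{m+1}]` as a left
`Dir_{(m)}`-comodule, where the coaction on `Dir_{(m+1)}` is `(π_m ⊗ id) ∘ Δ`
and the coaction on `Dir_{(m)} ⊗ k[X_{m+1}]` is induced by the comultiplication
of `Dir_{(m)}` on the left tensor factor; in particular `Dir_{(m+1)}` is a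
cofree left `Dir_{(m)}`-comodule.  `Dir_{(m)}` is modelled by its monomial
basis `Fin m →₀ ℕ` with the divided-type coproduct, and `k[X_{m+1}]` by its
basis `{X_{m+1}^e : e ∈ ℕ}`. -/
theorem dirichlet_truncation_cofree_comodule (k : Type*) [Field k]
    (m : ℕ) (hm : 1 ≤ m)
    -- Dir_{(m)}
    (Δm : ((Fin m →₀ ℕ) →₀ k) →ₗ[k] ((Fin m →₀ ℕ) →₀ k) ⊗[k] ((Fin m →₀ ℕ) →₀ k))
    (hΔm : ∀ a : Fin m →₀ ℕ, Δm (Finsupp.single a 1) =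
      ∑ p ∈ Finset.HasAntidiagonal.antidiagonal a,
        Finsupp.single p.1 (1 : k) ⊗ₜ[k] Finsupp.single p.2 (1 : k))
    -- Dir_{(m+1)}
    (Δm1 : ((Fin (m + 1) →₀ ℕ) →₀ k) →ₗ[k]
      ((Fin (m + 1) →₀ ℕ) →₀ k) ⊗[k] ((Fin (m + 1) →₀ ℕ) →₀ k))
    (hΔm1 : ∀ a : Fin (m + 1) →₀ ℕ, Δm1 (Finsupp.single a 1) =
      ∑ p ∈ Finset.HasAntidiagonal.antidiagonal a,
        Finsupp.single p.1 (1 : k) ⊗ₜ[k] Finsupp.single p.2 (1 : k))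
    -- the projection π_m
    (π : ((Fin (m + 1) →₀ ℕ) →₀ k) →ₗ[k] ((Fin m →₀ ℕ) →₀ k))
    (hπ : ∀ a : Fin (m + 1) →₀ ℕ, π (Finsupp.single a 1) =
      if a (Fin.last m) = 0 then
        Finsupp.single
          (Finsupp.comapDomain Fin.castSucc a ((Fin.castSucc_injective m).injOn)) 1
      else 0) :
    ∃ Φ : ((Fin (m + 1) →₀ ℕ) →₀ k) ≃ₗ[k] ((Fin m →₀ ℕ) →₀ k) ⊗[k] (ℕ →₀ k),
      -- Φ sends the monomial (embedded b)·X_{m+1}^e to (monomial b) ⊗ X_{m+1}^e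
      (∀ (b : Fin m →₀ ℕ) (e : ℕ),
        Φ (Finsupp.single (Finsupp.embDomain Fin.castSuccEmb b +
            Finsupp.single (Fin.last m) e) 1) =
          Finsupp.single b (1 : k) ⊗ₜ[k] Finsupp.single e (1 : k)) ∧
      -- Φ is a map of left Dir_{(m)}-comodules
      (∀ x : (Fin (m + 1) →₀ ℕ) →₀ k,
        TensorProduct.map LinearMap.id Φ.toLinearMap
            (TensorProduct.map π LinearMap.id (Δm1 x)) =
          (TensorProduct.assoc k ((Fin m →₀ ℕ) →₀ k) ((Fin m →₀ ℕ) →₀ k) (ℕ →₀ k))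
            (TensorProduct.map Δm LinearMap.id (Φ x))) := by
  classical
  set Φ : ((Fin (m + 1) →₀ ℕ) →₀ k) ≃ₗ[k] ((Fin m →₀ ℕ) →₀ k) ⊗[k] (ℕ →₀ k) :=
    (Finsupp.domLCongr (splitEquiv m)) ≪≫ₗ
      (finsuppTensorFinsupp' k (Fin m →₀ ℕ) ℕ).symm with hΦdef
  have hΦ : ∀ a : Fin (m + 1) →₀ ℕ,
      Φ (Finsupp.single a 1) =
        Finsupp.single (r a) (1 : k) ⊗ₜ[k] Finsupp.single (a (Fin.last m)) (1 : k) := by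
    intro a
    simp only [hΦdef, LinearEquiv.trans_apply, Finsupp.domLCongr_apply,
      Finsupp.domCongr_apply, Finsupp.equivMapDomain_single]
    have : (splitEquiv m) a = (r a, a (Fin.last m)) := rfl
    rw [this]
    simpa using finsuppTensorFinsupp'_symm_single_mul k (Fin m →₀ ℕ) ℕ
      (r a, a (Fin.last m)) 1 1
  refine ⟨Φ, ?_, ?_⟩
  · intro b e
    rw [hΦ]
    rw [show Finsupp.embDomain Fin.castSuccEmb b = emb b from rfl,
      r_emb_add_single, emb_last_eq_zero]
  · -- comodule map property
    set L1 : ((Fin (m + 1) →₀ ℕ) →₀ k) →ₗ[k]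
        ((Fin m →₀ ℕ) →₀ k) ⊗[k] (((Fin m →₀ ℕ) →₀ k) ⊗[k] (ℕ →₀ k)) :=
      (TensorProduct.map LinearMap.id Φ.toLinearMap) ∘ₗ
        (TensorProduct.map π LinearMap.id) ∘ₗ Δm1 with hL1
    set L2 : ((Fin (m + 1) →₀ ℕ) →₀ k) →ₗ[k]
        ((Fin m →₀ ℕ) →₀ k) ⊗[k] (((Fin m →₀ ℕ) →₀ k) ⊗[k] (ℕ →₀ k)) :=
      ((TensorProduct.assoc k ((Fin m →₀ ℕ) →₀ k) ((Fin m →₀ ℕ) →₀ k)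
          (ℕ →₀ k)).toLinearMap) ∘ₗ
        (TensorProduct.map Δm LinearMap.id) ∘ₗ Φ.toLinearMap with hL2
    suffices h : L1 = L2 by
      intro x
      exact LinearMap.congr_fun h x
    apply Finsupp.lhom_ext'
    intro a
    apply LinearMap.ext_ring
    simp only [LinearMap.comp_apply, Finsupp.lsingle_apply]
    -- compute both sides on single a 1
    rw [hL1, hL2]
    simp only [LinearMap.comp_apply, LinearEquiv.coe_coe]
    have hπ' : ∀ c : Fin (m + 1) →₀ ℕ, π (Finsupp.single c 1) =
        if c (Fin.last m) = 0 then Finsupp.single (r c) (1 : k) else 0 := fun c => hπ c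
    -- LHS
    rw [hΔm1, map_sum, map_sum]
    simp only [TensorProduct.map_tmul, LinearMap.id_apply, hπ',
      TensorProduct.ite_tmul, apply_ite (TensorProduct.map LinearMap.id Φ.toLinearMap),
      map_zero, LinearEquiv.coe_coe, hΦ]
    rw [← Finset.sum_filter]
    -- RHS
    rw [hΔm, TensorProduct.sum_tmul, ← LinearEquiv.coe_coe, map_sum]
    simp only [LinearEquiv.coe_coe, TensorProduct.assoc_tmul]
    -- reindex
    refine Finset.sum_nbij' (fun p => (r p.1, r p.2))
      (fun q => (emb q.1, emb q.2 + Finsupp.single (Fin.last m) (a (Fin.last m))))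
      ?_ ?_ ?_ ?_ ?_
    · rintro ⟨p1, p2⟩ hp
      rw [Finset.mem_filter, Finset.HasAntidiagonal.mem_antidiagonal] at hp
      rw [Finset.HasAntidiagonal.mem_antidiagonal, ← r_add, hp.1]
    · rintro ⟨q1, q2⟩ hq
      rw [Finset.HasAntidiagonal.mem_antidiagonal] at hq
      rw [Finset.mem_filter, Finset.HasAntidiagonal.mem_antidiagonal]
      constructor
      · rw [← add_assoc, show emb q1 + emb q2 = emb (q1 + q2) from
          (Finsupp.embDomain_add _ _ _).symm, hq, decomp]
      · exact emb_apply_last q1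
    · rintro ⟨p1, p2⟩ hp
      rw [Finset.mem_filter, Finset.HasAntidiagonal.mem_antidiagonal] at hp
      have h2 : p2 (Fin.last m) = a (Fin.last m) := by
        rw [← hp.1]; simp [hp.2]
      have h1 : emb (r p1) = p1 := by
        have := decomp p1
        rwa [hp.2, Finsupp.single_zero, add_zero] at this
      have h2' : emb (r p2) + Finsupp.single (Fin.last m) (a (Fin.last m)) = p2 := by
        rw [← h2]; exact decomp p2
      simp only [Prod.mk.injEq]
      exact ⟨h1, h2'⟩
    · rintro ⟨q1, q2⟩ hq
      simp only [Prod.mk.injEq]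
      exact ⟨r_emb q1, r_emb_add_single q2 _⟩
    · rintro ⟨p1, p2⟩ hp
      rw [Finset.mem_filter, Finset.HasAntidiagonal.mem_antidiagonal] at hp
      have h2 : p2 (Fin.last m) = a (Fin.last m) := by
        rw [← hp.1]; simp [hp.2]
      rw [h2]
end
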